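/- Any ℓ-dimensional linear subspace of ℝ^k contains at most 2^ℓ vectors all of whose entries lie in {+1, -1}. -/

import Mathlib

/-- Any ℓ-dimensional linear subspace of ℝ^k contains at most 2^ℓ vectors all of whose
entries lie in {+1, -1}. -/
theorem pm_one_vectors_in_subspace (k ℓ : ℕ) (V : Submodule ℝ (Fin k → ℝ))
    (hV : Module.finrank ℝ V = ℓ) :
    Set.ncard {v : Fin k → ℝ | v ∈ V ∧ ∀ i, v i = 1 ∨ v i = -1} ≤ 2 ^ ℓ := by
  classical
  set π : Fin k → Module.Dual ℝ V := fun i => (LinearMap.proj i).comp V.subtype with hπ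
  have hspan : Submodule.span ℝ (Set.range π) = ⊤ := by
    apply Submodule.eq_top_of_finrank_eq
    have hco : (Submodule.span ℝ (Set.range π)).dualCoannihilator = ⊥ := by
      rw [eq_bot_iff]
      intro x hx
      rw [Submodule.mem_dualCoannihilator] at hx
      have hx0 : ∀ i, (x : Fin k → ℝ) i = 0 := fun i =>
        hx (π i) (Submodule.subset_span ⟨i, rfl⟩)
      have : (x : Fin k → ℝ) = 0 := funext hx0
      simpa [Submodule.mem_bot] using Subtype.ext this
    have h := Subspace.finrank_add_finrank_dualCoannihilator_eq
      (Submodule.span ℝ (Set.range π))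
    rw [hco, finrank_bot, add_zero] at h
    exact h.trans Subspace.dual_finrank_eq.symm
  obtain ⟨b, hb_sub, hb_span, hb_li⟩ := exists_linearIndependent ℝ (Set.range π)
  rw [hspan] at hb_span
  have hbfin : b.Finite := hb_li.setFinite
  haveI := hbfin.fintype
  have hbasis : Module.Basis b ℝ (Module.Dual ℝ V) :=
    Module.Basis.mk hb_li (by rw [Subtype.range_coe, hb_span])
  have hcard : Fintype.card b = ℓ := by
    have := Module.finrank_eq_card_basis hbasis
    rw [Subspace.dual_finrank_eq, hV] at this
    omega
  -- the evaluation map V → (b → ℝ) is injective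
  set L : V →ₗ[ℝ] (b → ℝ) := LinearMap.pi fun f => (f : Module.Dual ℝ V) with hL
  have hLinj : Function.Injective L := by
    rw [← LinearMap.ker_eq_bot, eq_bot_iff]
    intro x hx
    rw [LinearMap.mem_ker] at hx
    have hb0 : ∀ f ∈ b, f x = 0 := fun f hf => congrFun hx ⟨f, hf⟩
    have hall : ∀ φ : Module.Dual ℝ V, φ x = 0 := by
      intro φ
      have hφ : φ ∈ Submodule.span ℝ b := by rw [hb_span]; trivial
      induction hφ using Submodule.span_induction with
      | mem f hf => exact hb0 f hf
      | zero => simp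
      | add f g _ _ hf hg => simp [hf, hg]
      | smul c f _ hf => simp [hf]
    simpa [Submodule.mem_bot] using (Module.forall_dual_apply_eq_zero_iff ℝ x).mp hall
  -- injection of the ±1 vectors into b → Bool
  set P := {v : Fin k → ℝ | v ∈ V ∧ ∀ i, v i = 1 ∨ v i = -1} with hP
  have hval : ∀ (v : Fin k → ℝ) (hv : v ∈ P) (f : b), (f : Module.Dual ℝ V) ⟨v, hv.1⟩ = 1 ∨
      (f : Module.Dual ℝ V) ⟨v, hv.1⟩ = -1 := by
    rintro v hv ⟨f, hf⟩
    obtain ⟨i, rfl⟩ := hb_sub hf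
    exact hv.2 i
  have hinj : Function.Injective (fun v : P => fun f : b =>
      decide ((f : Module.Dual ℝ V) ⟨v.1, v.2.1⟩ = 1)) := by
    rintro ⟨v, hv⟩ ⟨w, hw⟩ h
    have hLvw : L ⟨v, hv.1⟩ = L ⟨w, hw.1⟩ := by
      funext f
      have hfv := hval v hv f
      have hfw := hval w hw f
      have hd := congrFun h f
      simp only [decide_eq_decide] at hd
      show (f : Module.Dual ℝ V) ⟨v, hv.1⟩ = (f : Module.Dual ℝ V) ⟨w, hw.1⟩
      rcases hfv with h1 | h1 <;> rcases hfw with h2 | h2 <;> simp_all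
    have hvw : v = w := congrArg Subtype.val (hLinj hLvw)
    exact Subtype.ext hvw
  have hPfin : Finite P := Finite.of_injective _ hinj
  have : Nat.card P ≤ Nat.card (b → Bool) := Nat.card_le_card_of_injective _ hinj
  have h2 : Nat.card (↑b → Bool) = 2 ^ ℓ := by
    simp [Nat.card_eq_fintype_card, hcard]
  rw [h2, Nat.card_coe_set_eq] at this
  exact this
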